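/- arXiv:1802.03303 — 3 statements merged into one kernel-verified Lean document; each statement's English description precedes it below -/
import Mathlib

section
/- Let $2 \geq \alpha_1 \geq \alpha_2 > 0$ and let $k \geq 2$ be an integer. Then the double series $\sum_{m=1}^{\infty}\sum_{n=1}^{\infty} \frac{1}{m^{\beta}+n^{\beta}} \left(\frac{1}{m^{\alpha_1}+n^{\alpha_2}}\right)^{k-(k-1)(1/\alpha_1+1/\alpha_2)}$ converges for every $\beta > \max\{2-\alpha_1(k-(k-1)(1/\alpha_1+1/\alpha_2)),\ k\alpha_2(1/\alpha_1+1/\alpha_2-1)\}$. -/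
set_option maxHeartbeats 1000000


open Real

private lemma sum_aux {a : ℝ} (ha : 1 < a) :
    Summable fun n : ℕ => ((n : ℝ) + 1) ^ (-a) := by
  have h := (Real.summable_one_div_nat_add_rpow 1 a).2 ha
  refine h.congr fun n => ?_
  have h1 : (0:ℝ) ≤ (n : ℝ) + 1 := by positivity
  rw [abs_of_nonneg h1, one_div, ← Real.rpow_neg h1]

private lemma two_bound (g x A : ℝ) (hA : 0 < A) (h1 : A ≤ x) (h2 : x ≤ 2 * A) :
    x ^ (-g) ≤ 2 ^ |g| * A ^ (-g) := by
  rcases le_total 0 g with hg | hg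
  · have hx : x ^ (-g) ≤ A ^ (-g) :=
      Real.rpow_le_rpow_of_nonpos hA h1 (by linarith)
    have h2g : (1:ℝ) ≤ 2 ^ |g| := by
      rw [show (1:ℝ) = 2 ^ (0:ℝ) by simp]
      exact Real.rpow_le_rpow_of_exponent_le one_le_two (abs_nonneg g)
    nlinarith [Real.rpow_nonneg hA.le (-g), hx]
  · have habs : |g| = -g := abs_of_nonpos hg
    have hx : x ^ (-g) ≤ (2 * A) ^ (-g) :=
      Real.rpow_le_rpow (by linarith) h2 (by linarith)
    calc x ^ (-g) ≤ (2 * A) ^ (-g) := hx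
      _ = 2 ^ (-g) * A ^ (-g) := Real.mul_rpow (by norm_num) hA.le
      _ = 2 ^ |g| * A ^ (-g) := by rw [habs]

private lemma geo_le {a b : ℝ} (ha : 0 < a) (hb : 0 < b) {θ : ℝ} (h0 : 0 ≤ θ) (h1 : θ ≤ 1) :
    a ^ (1 - θ) * b ^ θ ≤ a + b := by
  have hab : 0 < a + b := by linarith
  calc a ^ (1 - θ) * b ^ θ ≤ (a + b) ^ (1 - θ) * (a + b) ^ θ := by
        apply mul_le_mul (Real.rpow_le_rpow ha.le (by linarith) (by linarith))
          (Real.rpow_le_rpow hb.le (by linarith) h0) (by positivity) (by positivity)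
    _ = (a + b) ^ ((1 - θ) + θ) := (Real.rpow_add hab _ _).symm
    _ = a + b := by norm_num

private lemma caseA (α₁ α₂ β γ t u M N : ℝ) (hM : 1 ≤ M) (hN : 1 ≤ N)
    (hα₂ : 0 < α₂) (h21 : α₂ ≤ α₁) (hβ0 : 0 < β)
    (hu0 : 0 < u) (huβ : u ≤ β) (hut : u ≤ t)
    (hA : N ^ α₂ ≤ M ^ α₁) :
    (1 / (M ^ β + N ^ β)) * (1 / (M ^ α₁ + N ^ α₂)) ^ γ ≤
      2 ^ |γ| * (M ^ (-(α₁ * γ + β - u - (α₁ / α₂) * (t - u))) * N ^ (-t)) := by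
  have hM0 : (0:ℝ) < M := lt_of_lt_of_le one_pos hM
  have hN0 : (0:ℝ) < N := lt_of_lt_of_le one_pos hN
  have hα₁ : 0 < α₁ := lt_of_lt_of_le hα₂ h21
  have hD0 : (0:ℝ) < M ^ α₁ + N ^ α₂ := by positivity
  have hE0 : (0:ℝ) < M ^ β + N ^ β := by positivity
  have hfeq : (1 / (M ^ β + N ^ β)) * (1 / (M ^ α₁ + N ^ α₂)) ^ γ
      = (M ^ β + N ^ β)⁻¹ * (M ^ α₁ + N ^ α₂) ^ (-γ) := by
    rw [one_div, one_div, Real.inv_rpow hD0.le, ← Real.rpow_neg hD0.le]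
  -- bound for the D-part
  have sA : (M ^ α₁ + N ^ α₂) ^ (-γ) ≤ 2 ^ |γ| * M ^ (-(α₁ * γ)) := by
    have := two_bound γ (M ^ α₁ + N ^ α₂) (M ^ α₁) (by positivity)
      (le_add_of_nonneg_right (by positivity)) (by nlinarith)
    calc (M ^ α₁ + N ^ α₂) ^ (-γ) ≤ 2 ^ |γ| * (M ^ α₁) ^ (-γ) := this
      _ = 2 ^ |γ| * M ^ (-(α₁ * γ)) := by
          rw [← Real.rpow_mul hM0.le, mul_neg]

  -- bound for the E-part
  have sE : (M ^ β + N ^ β)⁻¹ ≤ M ^ (-(β - u)) * N ^ (-u) := by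
    have hθ0 : (0:ℝ) ≤ u / β := by positivity
    have hθ1 : u / β ≤ 1 := (div_le_one hβ0).2 huβ
    have hge : M ^ (β - u) * N ^ u ≤ M ^ β + N ^ β := by
      have h := geo_le (by positivity : (0:ℝ) < M ^ β) (by positivity : (0:ℝ) < N ^ β)
        hθ0 hθ1
      have e1 : (M ^ β) ^ (1 - u / β) = M ^ (β - u) := by
        rw [← Real.rpow_mul hM0.le]
        congr 1; field_simp
      have e2 : (N ^ β) ^ (u / β) = N ^ u := by
        rw [← Real.rpow_mul hN0.le]
        congr 1; field_simp
      rwa [e1, e2] at h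
    have hpos : (0:ℝ) < M ^ (β - u) * N ^ u := by positivity
    calc (M ^ β + N ^ β)⁻¹ ≤ (M ^ (β - u) * N ^ u)⁻¹ := inv_anti₀ hpos hge
      _ = M ^ (-(β - u)) * N ^ (-u) := by
          rw [mul_inv, ← Real.rpow_neg hM0.le, ← Real.rpow_neg hN0.le]
  -- region bound
  have sR : N ^ (-u) ≤ M ^ ((α₁ / α₂) * (t - u)) * N ^ (-t) := by
    have he : (0:ℝ) ≤ (t - u) / α₂ := by
      apply div_nonneg (by linarith) hα₂.le
    have h := Real.rpow_le_rpow (by positivity) hA he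
    have e1 : (N ^ α₂) ^ ((t - u) / α₂) = N ^ (t - u) := by
      rw [← Real.rpow_mul hN0.le]; congr 1; field_simp
    have e2 : (M ^ α₁) ^ ((t - u) / α₂) = M ^ ((α₁ / α₂) * (t - u)) := by
      rw [← Real.rpow_mul hM0.le]; congr 1; field_simp
    rw [e1, e2] at h
    calc N ^ (-u) = N ^ (t - u) * N ^ (-t) := by
          rw [← Real.rpow_add hN0]; congr 1; ring
      _ ≤ M ^ ((α₁ / α₂) * (t - u)) * N ^ (-t) :=
          mul_le_mul_of_nonneg_right h (by positivity)
  rw [hfeq]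
  calc (M ^ β + N ^ β)⁻¹ * (M ^ α₁ + N ^ α₂) ^ (-γ)
      ≤ (M ^ (-(β - u)) * N ^ (-u)) * (2 ^ |γ| * M ^ (-(α₁ * γ))) := by
        apply mul_le_mul sE sA (by positivity) (by positivity)
    _ ≤ (M ^ (-(β - u)) * (M ^ ((α₁ / α₂) * (t - u)) * N ^ (-t))) *
          (2 ^ |γ| * M ^ (-(α₁ * γ))) := by
        apply mul_le_mul_of_nonneg_right _ (by positivity)
        exact mul_le_mul_of_nonneg_left sR (by positivity)
    _ = 2 ^ |γ| * ((M ^ (-(β - u)) * M ^ ((α₁ / α₂) * (t - u)) * M ^ (-(α₁ * γ))) * N ^ (-t)) := by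
        ring
    _ = 2 ^ |γ| * (M ^ (-(α₁ * γ + β - u - (α₁ / α₂) * (t - u))) * N ^ (-t)) := by
        have hexp : -(β - u) + (α₁ / α₂) * (t - u) + -(α₁ * γ)
            = -(α₁ * γ + β - u - (α₁ / α₂) * (t - u)) := by ring
        rw [← Real.rpow_add hM0, ← Real.rpow_add hM0, hexp]

private lemma caseB (α₁ α₂ β γ t M N : ℝ) (hM : 1 ≤ M) (hN : 1 ≤ N)
    (hα₂ : 0 < α₂) (h21 : α₂ ≤ α₁) (hβ0 : 0 < β) (ht0 : 0 ≤ t)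
    (hB : M ^ α₁ ≤ N ^ α₂) :
    (1 / (M ^ β + N ^ β)) * (1 / (M ^ α₁ + N ^ α₂)) ^ γ ≤
      2 ^ |γ| * (M ^ (-t) * N ^ (-(β + α₂ * γ - (α₂ / α₁) * t))) := by
  have hM0 : (0:ℝ) < M := lt_of_lt_of_le one_pos hM
  have hN0 : (0:ℝ) < N := lt_of_lt_of_le one_pos hN
  have hα₁ : 0 < α₁ := lt_of_lt_of_le hα₂ h21
  have hD0 : (0:ℝ) < M ^ α₁ + N ^ α₂ := by positivity
  have hE0 : (0:ℝ) < M ^ β + N ^ β := by positivity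
  have hfeq : (1 / (M ^ β + N ^ β)) * (1 / (M ^ α₁ + N ^ α₂)) ^ γ
      = (M ^ β + N ^ β)⁻¹ * (M ^ α₁ + N ^ α₂) ^ (-γ) := by
    rw [one_div, one_div, Real.inv_rpow hD0.le, ← Real.rpow_neg hD0.le]
  have sA : (M ^ α₁ + N ^ α₂) ^ (-γ) ≤ 2 ^ |γ| * N ^ (-(α₂ * γ)) := by
    have := two_bound γ (M ^ α₁ + N ^ α₂) (N ^ α₂) (by positivity)
      (le_add_of_nonneg_left (by positivity)) (by nlinarith)
    calc (M ^ α₁ + N ^ α₂) ^ (-γ) ≤ 2 ^ |γ| * (N ^ α₂) ^ (-γ) := this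
      _ = 2 ^ |γ| * N ^ (-(α₂ * γ)) := by rw [← Real.rpow_mul hN0.le, mul_neg]
  have sE : (M ^ β + N ^ β)⁻¹ ≤ N ^ (-β) := by
    calc (M ^ β + N ^ β)⁻¹ ≤ (N ^ β)⁻¹ :=
          inv_anti₀ (by positivity) (le_add_of_nonneg_left (by positivity))
      _ = N ^ (-β) := (Real.rpow_neg hN0.le β).symm
  have sR : (1:ℝ) ≤ M ^ (-t) * N ^ ((α₂ / α₁) * t) := by
    have he : (0:ℝ) ≤ t / α₁ := div_nonneg ht0 hα₁.le
    have h := Real.rpow_le_rpow (by positivity) hB he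
    have e1 : (M ^ α₁) ^ (t / α₁) = M ^ t := by
      rw [← Real.rpow_mul hM0.le]; congr 1; field_simp
    have e2 : (N ^ α₂) ^ (t / α₁) = N ^ ((α₂ / α₁) * t) := by
      rw [← Real.rpow_mul hN0.le]; congr 1; field_simp
    rw [e1, e2] at h
    have hMt : (0:ℝ) < M ^ t := by positivity
    have := mul_le_mul_of_nonneg_left h (inv_nonneg.2 hMt.le)
    rwa [inv_mul_cancel₀ hMt.ne', ← Real.rpow_neg hM0.le] at this
  rw [hfeq]
  calc (M ^ β + N ^ β)⁻¹ * (M ^ α₁ + N ^ α₂) ^ (-γ)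
      ≤ N ^ (-β) * (2 ^ |γ| * N ^ (-(α₂ * γ))) := by
        apply mul_le_mul sE sA (by positivity) (by positivity)
    _ = (N ^ (-β) * (2 ^ |γ| * N ^ (-(α₂ * γ)))) * 1 := by ring
    _ ≤ (N ^ (-β) * (2 ^ |γ| * N ^ (-(α₂ * γ)))) * (M ^ (-t) * N ^ ((α₂ / α₁) * t)) := by
        apply mul_le_mul_of_nonneg_left sR (by positivity)
    _ = 2 ^ |γ| * (M ^ (-t) * (N ^ (-β) * N ^ (-(α₂ * γ)) * N ^ ((α₂ / α₁) * t))) := by ring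
    _ = 2 ^ |γ| * (M ^ (-t) * N ^ (-(β + α₂ * γ - (α₂ / α₁) * t))) := by
        have hexp : -β + -(α₂ * γ) + (α₂ / α₁) * t
            = -(β + α₂ * γ - (α₂ / α₁) * t) := by ring
        rw [← Real.rpow_add hN0, ← Real.rpow_add hN0, hexp]

private lemma main_aux (α₁ α₂ β γ t u : ℝ)
    (hα₂ : 0 < α₂) (h21 : α₂ ≤ α₁) (hβ0 : 0 < β)
    (ht1 : 1 < t) (hu0 : 0 < u) (huβ : u ≤ β) (hut : u ≤ t)
    (ha₁ : 1 < α₁ * γ + β - u - (α₁ / α₂) * (t - u))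
    (hb₂ : 1 < β + α₂ * γ - (α₂ / α₁) * t) :
    Summable (fun p : ℕ × ℕ =>
      (1 / (((p.1 : ℝ) + 1) ^ β + ((p.2 : ℝ) + 1) ^ β)) *
        (1 / (((p.1 : ℝ) + 1) ^ α₁ + ((p.2 : ℝ) + 1) ^ α₂)) ^ γ) := by
  set a₁ : ℝ := α₁ * γ + β - u - (α₁ / α₂) * (t - u) with ha₁def
  set b₂ : ℝ := β + α₂ * γ - (α₂ / α₁) * t with hb₂def
  have hsum : Summable (fun p : ℕ × ℕ =>
      2 ^ |γ| * (((p.1 : ℝ) + 1) ^ (-a₁) * ((p.2 : ℝ) + 1) ^ (-t)) +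
      2 ^ |γ| * (((p.1 : ℝ) + 1) ^ (-t) * ((p.2 : ℝ) + 1) ^ (-b₂))) := by
    apply Summable.add
    · exact (Summable.mul_of_nonneg (sum_aux ha₁) (sum_aux ht1)
        (fun n => by positivity) (fun n => by positivity)).mul_left _
    · exact (Summable.mul_of_nonneg (sum_aux ht1) (sum_aux hb₂)
        (fun n => by positivity) (fun n => by positivity)).mul_left _
  apply Summable.of_nonneg_of_le (fun p => by positivity) _ hsum
  intro p
  set M : ℝ := (p.1 : ℝ) + 1 with hMdef
  set N : ℝ := (p.2 : ℝ) + 1 with hNdef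
  have hM : (1:ℝ) ≤ M := by
    have : (0:ℝ) ≤ (p.1 : ℝ) := Nat.cast_nonneg _
    rw [hMdef]; linarith
  have hN : (1:ℝ) ≤ N := by
    have : (0:ℝ) ≤ (p.2 : ℝ) := Nat.cast_nonneg _
    rw [hNdef]; linarith
  rcases le_total (N ^ α₂) (M ^ α₁) with hc | hc
  · calc (1 / (M ^ β + N ^ β)) * (1 / (M ^ α₁ + N ^ α₂)) ^ γ
        ≤ 2 ^ |γ| * (M ^ (-a₁) * N ^ (-t)) :=
          caseA α₁ α₂ β γ t u M N hM hN hα₂ h21 hβ0 hu0 huβ hut hc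
      _ ≤ _ := le_add_of_nonneg_right (by positivity)
  · calc (1 / (M ^ β + N ^ β)) * (1 / (M ^ α₁ + N ^ α₂)) ^ γ
        ≤ 2 ^ |γ| * (M ^ (-t) * N ^ (-b₂)) :=
          caseB α₁ α₂ β γ t M N hM hN hα₂ h21 hβ0 (by linarith) hc
      _ ≤ _ := le_add_of_nonneg_left (by positivity)

theorem stmt_0 (α₁ α₂ : ℝ) (hα₂ : 0 < α₂) (h21 : α₂ ≤ α₁) (h12 : α₁ ≤ 2)
    (k : ℕ) (hk : 2 ≤ k) (β : ℝ)
    (hβ : β > max (2 - α₁ * ((k : ℝ) - ((k : ℝ) - 1) * (1 / α₁ + 1 / α₂)))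
      ((k : ℝ) * α₂ * (1 / α₁ + 1 / α₂ - 1))) :
    Summable (fun p : ℕ × ℕ =>
      (1 / (((p.1 : ℝ) + 1) ^ β + ((p.2 : ℝ) + 1) ^ β)) *
        (1 / (((p.1 : ℝ) + 1) ^ α₁ + ((p.2 : ℝ) + 1) ^ α₂)) ^
          ((k : ℝ) - ((k : ℝ) - 1) * (1 / α₁ + 1 / α₂))) := by
  have hα₁ : 0 < α₁ := lt_of_lt_of_le hα₂ h21
  set γ : ℝ := (k : ℝ) - ((k : ℝ) - 1) * (1 / α₁ + 1 / α₂) with hγdef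
  clear_value γ
  have hβ1 : 2 - α₁ * γ < β := lt_of_le_of_lt (le_max_left _ _) hβ
  have hβ2 : (k : ℝ) * α₂ * (1 / α₁ + 1 / α₂ - 1) < β := lt_of_le_of_lt (le_max_right _ _) hβ
  have hα₂2 : α₂ ≤ 2 := le_trans h21 h12
  have hS : (1:ℝ) ≤ 1 / α₁ + 1 / α₂ := by
    have h1 : (1:ℝ) / 2 ≤ 1 / α₁ := one_div_le_one_div_of_le hα₁ h12
    have h2 : (1:ℝ) / 2 ≤ 1 / α₂ := one_div_le_one_div_of_le hα₂ hα₂2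
    linarith
  have hk1 : (1:ℝ) ≤ (k : ℝ) := by exact_mod_cast Nat.one_le_of_lt hk
  have hβ0 : 0 < β := by
    have : (0:ℝ) ≤ (k : ℝ) * α₂ * (1 / α₁ + 1 / α₂ - 1) := by
      apply mul_nonneg (mul_nonneg (by linarith) hα₂.le) (by linarith)
    linarith
  -- rewrite the second hypothesis
  have hid : (k : ℝ) * α₂ * (1 / α₁ + 1 / α₂ - 1) = 1 + α₂ / α₁ - α₂ * γ := by
    rw [hγdef]; field_simp; ring
  have hρ : 1 + α₂ / α₁ - α₂ * γ < β := by rw [← hid]; exact hβ2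
  have hρ0 : 0 < β + α₂ * γ - α₂ / α₁ - 1 := by linarith
  set r : ℝ := α₁ / α₂ with hrdef
  clear_value r
  have hr0 : 0 < r := by rw [hrdef]; exact div_pos hα₁ hα₂
  have hr1 : r * α₂ = α₁ := by rw [hrdef]; field_simp
  have hr2 : r * (α₂ / α₁) = 1 := by rw [hrdef]; field_simp
  set L : ℝ := α₁ * γ + β - min β 1 - r * (1 - min β 1) with hLdef
  clear_value L
  have hL : 1 < L := by
    rcases le_total 1 β with hb | hb
    · have hmin : min β 1 = 1 := min_eq_right hb
      rw [hLdef, hmin]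
      nlinarith
    · have hmin : min β 1 = β := min_eq_left hb
      rw [hLdef, hmin]
      have heq : α₁ * γ + β - β - r * (1 - β) - 1 = r * (β + α₂ * γ - α₂ / α₁ - 1) := by
        rw [hrdef]; field_simp; ring
      linarith [mul_pos hr0 hρ0, heq]
  set δ : ℝ := min (min β 1 / 2)
    (min ((L - 1) / (2 * (1 + 2 * r))) ((β + α₂ * γ - α₂ / α₁ - 1) * α₁ / α₂ / 2)) with hδdef
  clear_value δ
  have hmin0 : 0 < min β 1 := lt_min hβ0 one_pos
  have hδ0 : 0 < δ := by
    rw [hδdef]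
    apply lt_min (by linarith)
    apply lt_min
    · apply div_pos (by linarith) (by positivity)
    · exact div_pos (div_pos (mul_pos hρ0 hα₁) hα₂) two_pos
  have hδa : δ ≤ min β 1 / 2 := by rw [hδdef]; exact min_le_left _ _
  have hδb : δ ≤ (L - 1) / (2 * (1 + 2 * r)) := by
    rw [hδdef]; exact le_trans (min_le_right _ _) (min_le_left _ _)
  have hδc : δ ≤ (β + α₂ * γ - α₂ / α₁ - 1) * α₁ / α₂ / 2 := by
    rw [hδdef]; exact le_trans (min_le_right _ _) (min_le_right _ _)
  set t : ℝ := 1 + δ with htdef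
  clear_value t
  set u : ℝ := min β 1 - δ with hudef
  clear_value u
  have ht1 : 1 < t := by rw [htdef]; linarith
  have hu0 : 0 < u := by rw [hudef]; linarith
  have huβ : u ≤ β := by
    have : min β 1 ≤ β := min_le_left _ _
    rw [hudef]; linarith
  have hut : u ≤ t := by
    have : min β 1 ≤ 1 := min_le_right _ _
    rw [hudef, htdef]; linarith
  have ha₁ : 1 < α₁ * γ + β - u - (α₁ / α₂) * (t - u) := by
    have heq : α₁ * γ + β - u - (α₁ / α₂) * (t - u) = L + δ * (1 - 2 * r) := by
      rw [hLdef, hudef, htdef, hrdef]; ring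
    rw [heq]
    have hmul : δ * (2 * (1 + 2 * r)) ≤ L - 1 := by
      rw [le_div_iff₀ (by positivity)] at hδb
      linarith [hδb]
    nlinarith [mul_nonneg hδ0.le hr0.le]
  have hb₂ : 1 < β + α₂ * γ - (α₂ / α₁) * t := by
    have hkey : (α₂ / α₁) * ((β + α₂ * γ - α₂ / α₁ - 1) * α₁ / α₂ / 2)
        = (β + α₂ * γ - α₂ / α₁ - 1) / 2 := by
      field_simp
    have h1 : (α₂ / α₁) * δ ≤ (β + α₂ * γ - α₂ / α₁ - 1) / 2 := by
      calc (α₂ / α₁) * δ ≤ (α₂ / α₁) * ((β + α₂ * γ - α₂ / α₁ - 1) * α₁ / α₂ / 2) :=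
            mul_le_mul_of_nonneg_left hδc (le_of_lt (div_pos hα₂ hα₁))
        _ = (β + α₂ * γ - α₂ / α₁ - 1) / 2 := hkey
    rw [htdef]
    have : (α₂ / α₁) * (1 + δ) = α₂ / α₁ + (α₂ / α₁) * δ := by ring
    linarith [this, h1]
  exact main_aux α₁ α₂ β γ t u hα₂ h21 hβ0 ht1 hu0 huβ hut ha₁ hb₂
end

section
/- Let $2 \geq \alpha_1 \geq \alpha_2 > 0$ and let $k \geq 2$ be an integer. If the double series $\sum_{m=1}^{\infty}\sum_{n=1}^{\infty} \frac{1}{m^{\beta}+n^{\beta}} \left(\frac{1}{m^{\alpha_1}+n^{\alpha_2}}\right)^{k-(k-1)(1/\alpha_1+1/\alpha_2)}$ converges for some $\beta \in (0,2]$, then $\beta > \max\{2-\alpha_1(k-(k-1)(1/\alpha_1+1/\alpha_2)),\ k\alpha_2(1/\alpha_1+1/\alpha_2-1)\}$. -/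
open Real
set_option maxHeartbeats 1000000

lemma aux_pow_lower (l A x : ℝ) (hA : 0 < A) (h1 : A ≤ x) (h2 : x ≤ 2*A) :
    min ((2:ℝ)^(-l)) 1 * A ^ (-l) ≤ (1/x) ^ l := by
  have hx : 0 < x := lt_of_lt_of_le hA h1
  have hrw : (1/x) ^ l = x ^ (-l) := by
    rw [one_div, Real.inv_rpow hx.le, ← Real.rpow_neg hx.le]
  rw [hrw]
  rcases le_or_gt 0 l with hl | hl
  · have key : (2*A) ^ (-l) ≤ x ^ (-l) := by
      rw [Real.rpow_neg (by positivity), Real.rpow_neg hx.le]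
      exact inv_anti₀ (Real.rpow_pos_of_pos hx l) (Real.rpow_le_rpow hx.le h2 hl)
    calc min ((2:ℝ)^(-l)) 1 * A ^ (-l) ≤ (2:ℝ)^(-l) * A ^ (-l) :=
          mul_le_mul_of_nonneg_right (min_le_left _ _) (Real.rpow_nonneg hA.le _)
      _ = (2*A) ^ (-l) := (Real.mul_rpow (by norm_num) hA.le).symm
      _ ≤ x ^ (-l) := key
  · calc min ((2:ℝ)^(-l)) 1 * A ^ (-l) ≤ 1 * A ^ (-l) :=
          mul_le_mul_of_nonneg_right (min_le_right _ _) (Real.rpow_nonneg hA.le _)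
      _ = A ^ (-l) := one_mul _
      _ ≤ x ^ (-l) := Real.rpow_le_rpow hA.le h1 (by linarith)

lemma tsum_ite_range (N : ℕ) (a : ℝ) (P : ℕ → Prop) [DecidablePred P]
    (h : ∀ j, P j ↔ j < N) : ∑' j : ℕ, (if P j then a else 0) = N * a := by
  rw [tsum_eq_sum (s := Finset.range N) (by intro j hj; simp [h, Finset.mem_range.not.mp hj])]
  rw [Finset.sum_congr rfl (fun j hj => if_pos ((h j).mpr (Finset.mem_range.mp hj)))]
  simp [Finset.sum_const, mul_comm]

theorem stmt_1 (α₁ α₂ : ℝ) (hα₂ : 0 < α₂) (h21 : α₂ ≤ α₁) (h12 : α₁ ≤ 2)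
    (k : ℕ) (hk : 2 ≤ k) (β : ℝ) (hβ0 : 0 < β) (hβ2 : β ≤ 2)
    (hsum : Summable (fun p : ℕ × ℕ =>
      (1 / (((p.1 : ℝ) + 1) ^ β + ((p.2 : ℝ) + 1) ^ β)) *
        (1 / (((p.1 : ℝ) + 1) ^ α₁ + ((p.2 : ℝ) + 1) ^ α₂)) ^
          ((k : ℝ) - ((k : ℝ) - 1) * (1 / α₁ + 1 / α₂)))) :
    β > max (2 - α₁ * ((k : ℝ) - ((k : ℝ) - 1) * (1 / α₁ + 1 / α₂)))
      ((k : ℝ) * α₂ * (1 / α₁ + 1 / α₂ - 1)) := by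
  have hα₁ : 0 < α₁ := lt_of_lt_of_le hα₂ h21
  set l : ℝ := (k : ℝ) - ((k : ℝ) - 1) * (1 / α₁ + 1 / α₂) with hl
  set f : ℕ × ℕ → ℝ := fun p =>
      (1 / (((p.1 : ℝ) + 1) ^ β + ((p.2 : ℝ) + 1) ^ β)) *
        (1 / (((p.1 : ℝ) + 1) ^ α₁ + ((p.2 : ℝ) + 1) ^ α₂)) ^ l with hf
  set c : ℝ := (1/2) * min ((2:ℝ)^(-l)) 1 with hc
  have hmin0 : 0 < min ((2:ℝ)^(-l)) 1 := lt_min (Real.rpow_pos_of_pos two_pos _) one_pos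
  have hc0 : 0 < c := by rw [hc]; nlinarith
  have hfnn : ∀ p : ℕ × ℕ, 0 ≤ f p := by
    intro p
    rw [hf]
    positivity
  -- Part 1 : the region j ≤ i
  have part1 : 2 < β + α₁ * l := by
    set t : ℝ := β + α₁ * l with ht
    have key : ∀ i j : ℕ, j ≤ i → c * ((i:ℝ)+1)^(-t) ≤ f (i, j) := by
      intro i j hji
      set m : ℝ := (i:ℝ)+1 with hm
      set n : ℝ := (j:ℝ)+1 with hn
      have hm1 : (1:ℝ) ≤ m := by rw [hm]; exact le_add_of_nonneg_left (Nat.cast_nonneg i)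
      have hn0 : (0:ℝ) ≤ n := by rw [hn]; positivity
      have hnm : n ≤ m := by
        rw [hm, hn]
        have : (j:ℝ) ≤ (i:ℝ) := Nat.cast_le.mpr hji
        linarith
      have hm0 : (0:ℝ) < m := by linarith
      have hb : n ^ β ≤ m ^ β := Real.rpow_le_rpow hn0 hnm hβ0.le
      have ha : n ^ α₂ ≤ m ^ α₁ :=
        le_trans (Real.rpow_le_rpow hn0 hnm hα₂.le)
          (Real.rpow_le_rpow_of_exponent_le hm1 h21)
      have hA0 : (0:ℝ) < m ^ α₁ := Real.rpow_pos_of_pos hm0 _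
      have hna0 : (0:ℝ) ≤ n ^ α₂ := Real.rpow_nonneg hn0 _
      have hnb0 : (0:ℝ) ≤ n ^ β := Real.rpow_nonneg hn0 _
      have hmb0 : (0:ℝ) < m ^ β := Real.rpow_pos_of_pos hm0 _
      have h1 : (1/2) * m ^ (-β) ≤ 1 / (m ^ β + n ^ β) := by
        rw [Real.rpow_neg hm0.le,
          show (1/2) * (m^β)⁻¹ = 1 / (2 * m^β) by field_simp]
        apply one_div_le_one_div_of_le (by positivity) (by linarith)
      have h2 : min ((2:ℝ)^(-l)) 1 * (m ^ α₁) ^ (-l) ≤ (1 / (m ^ α₁ + n ^ α₂)) ^ l :=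
        aux_pow_lower l (m^α₁) _ hA0 (le_add_of_nonneg_right hna0) (by linarith)
      have e : c * m ^ (-t) = ((1/2) * m ^ (-β)) * (min ((2:ℝ)^(-l)) 1 * (m ^ α₁) ^ (-l)) := by
        rw [← Real.rpow_mul hm0.le, ht,
          show -(β + α₁ * l) = -β + α₁ * (-l) by ring, Real.rpow_add hm0, hc]
        ring
      have hgoal : f (i, j) = (1 / (m ^ β + n ^ β)) * (1 / (m ^ α₁ + n ^ α₂)) ^ l := rfl
      rw [hgoal, e]
      exact mul_le_mul h1 h2 (by positivity) (by positivity)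
    have hg : Summable (fun p : ℕ × ℕ =>
        if p.2 ≤ p.1 then c * ((p.1:ℝ)+1)^(-t) else 0) := by
      apply Summable.of_nonneg_of_le _ _ hsum
      · intro p; split <;> positivity
      · rintro ⟨i, j⟩; dsimp only; split
        · exact key i j ‹_›
        · exact hfnn (i, j)
    have hmarg := ((summable_prod_of_nonneg (by intro p; dsimp only; split <;> positivity)).mp hg).2
    have hmarg2 : Summable (fun i : ℕ => ((i:ℝ)+1) * (c * ((i:ℝ)+1)^(-t))) := by
      apply hmarg.congr
      intro i
      have := tsum_ite_range (i+1) (c * ((i:ℝ)+1)^(-t)) (fun j => j ≤ i)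
        (fun j => Nat.lt_succ_iff.symm)
      rw [this]; push_cast; ring
    have hmarg3 : Summable (fun i : ℕ => ((i:ℝ)+1)^((1:ℝ)-t)) := by
      have h' : Summable (fun i : ℕ => c * ((i:ℝ)+1)^((1:ℝ)-t)) := by
        apply hmarg2.congr
        intro i
        have h0 : (0:ℝ) < (i:ℝ)+1 := by positivity
        rw [show (1:ℝ) - t = 1 + (-t) by ring, Real.rpow_add h0, Real.rpow_one]; ring
      exact (summable_mul_left_iff hc0.ne').mp h'
    have hfin : Summable (fun i : ℕ => ((i:ℝ))^((1:ℝ)-t)) := by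
      rw [← summable_nat_add_iff 1]
      apply hmarg3.congr
      intro i
      push_cast
      ring_nf
    have := summable_nat_rpow.mp hfin
    linarith
  -- Part 2 : the region m ≤ n^r
  have part2 : α₂/α₁ - (β + α₂ * l) < -1 := by
    set r : ℝ := α₂/α₁ with hr
    have hr0 : 0 < r := div_pos hα₂ hα₁
    have hr1 : r ≤ 1 := by rw [hr, div_le_one hα₁]; exact h21
    set q : ℝ := β + α₂ * l with hq
    have hsum2 : Summable (fun p : ℕ × ℕ => f (p.2, p.1)) := hsum.prod_symm
    have key : ∀ i j : ℕ, ((j:ℝ)+1) ≤ ((i:ℝ)+1)^r → c * ((i:ℝ)+1)^(-q) ≤ f (j, i) := by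
      intro i j hji
      set m : ℝ := (j:ℝ)+1 with hm
      set n : ℝ := (i:ℝ)+1 with hn
      have hm0 : (0:ℝ) < m := by rw [hm]; positivity
      have hn1 : (1:ℝ) ≤ n := by rw [hn]; exact le_add_of_nonneg_left (Nat.cast_nonneg i)
      have hn0 : (0:ℝ) < n := by linarith
      have hb : m ^ β ≤ n ^ β := by
        calc m ^ β ≤ (n^r) ^ β := Real.rpow_le_rpow hm0.le hji hβ0.le
          _ = n ^ (r*β) := by rw [← Real.rpow_mul hn0.le]
          _ ≤ n ^ β := Real.rpow_le_rpow_of_exponent_le hn1 (by nlinarith)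
      have ha : m ^ α₁ ≤ n ^ α₂ := by
        calc m ^ α₁ ≤ (n^r) ^ α₁ := Real.rpow_le_rpow hm0.le hji hα₁.le
          _ = n ^ (r*α₁) := by rw [← Real.rpow_mul hn0.le]
          _ = n ^ α₂ := by rw [hr, div_mul_cancel₀ _ hα₁.ne']
      have hA0 : (0:ℝ) < n ^ α₂ := Real.rpow_pos_of_pos hn0 _
      have hma0 : (0:ℝ) ≤ m ^ α₁ := Real.rpow_nonneg hm0.le _
      have hmb0 : (0:ℝ) ≤ m ^ β := Real.rpow_nonneg hm0.le _
      have hnb0 : (0:ℝ) < n ^ β := Real.rpow_pos_of_pos hn0 _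
      have h1 : (1/2) * n ^ (-β) ≤ 1 / (m ^ β + n ^ β) := by
        rw [Real.rpow_neg hn0.le,
          show (1/2) * (n^β)⁻¹ = 1 / (2 * n^β) by field_simp]
        apply one_div_le_one_div_of_le (by positivity) (by linarith)
      have h2 : min ((2:ℝ)^(-l)) 1 * (n ^ α₂) ^ (-l) ≤ (1 / (m ^ α₁ + n ^ α₂)) ^ l :=
        aux_pow_lower l (n^α₂) _ hA0 (le_add_of_nonneg_left hma0) (by linarith)
      have e : c * n ^ (-q) = ((1/2) * n ^ (-β)) * (min ((2:ℝ)^(-l)) 1 * (n ^ α₂) ^ (-l)) := by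
        rw [← Real.rpow_mul hn0.le, hq,
          show -(β + α₂ * l) = -β + α₂ * (-l) by ring, Real.rpow_add hn0, hc]
        ring
      have hgoal : f (j, i) = (1 / (m ^ β + n ^ β)) * (1 / (m ^ α₁ + n ^ α₂)) ^ l := rfl
      rw [hgoal, e]
      exact mul_le_mul h1 h2 (by positivity) (by positivity)
    have hg : Summable (fun p : ℕ × ℕ =>
        if ((p.2:ℝ)+1) ≤ ((p.1:ℝ)+1)^r then c * ((p.1:ℝ)+1)^(-q) else 0) := by
      apply Summable.of_nonneg_of_le _ _ hsum2
      · intro p; split <;> positivity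
      · rintro ⟨i, j⟩; dsimp only; split
        · exact key i j ‹_›
        · exact hfnn (j, i)
    have hmarg := ((summable_prod_of_nonneg (by intro p; dsimp only; split <;> positivity)).mp hg).2
    have hmarg2 : Summable (fun i : ℕ =>
        (⌊((i:ℝ)+1)^r⌋₊ : ℝ) * (c * ((i:ℝ)+1)^(-q))) := by
      apply hmarg.congr
      intro i
      have := tsum_ite_range (⌊((i:ℝ)+1)^r⌋₊) (c * ((i:ℝ)+1)^(-q))
        (fun j => ((j:ℝ)+1) ≤ ((i:ℝ)+1)^r) ?_
      · rw [this]
      · intro j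
        rw [← Nat.add_one_le_iff, Nat.le_floor_iff (by positivity)]
        push_cast
        rfl
    set N : ℕ := ⌈(2:ℝ)^(1/r)⌉₊ with hN
    have hNbig : ∀ i : ℕ, N ≤ i → (2:ℝ) ≤ ((i:ℝ)+1)^r := by
      intro i hi
      have h1 : (2:ℝ)^(1/r) ≤ (i:ℝ)+1 := by
        calc (2:ℝ)^(1/r) ≤ (N:ℝ) := Nat.le_ceil _
          _ ≤ (i:ℝ) := Nat.cast_le.mpr hi
          _ ≤ (i:ℝ)+1 := by linarith
      calc (2:ℝ) = ((2:ℝ)^(1/r))^r := by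
            rw [← Real.rpow_mul (by norm_num), one_div, inv_mul_cancel₀ hr0.ne', Real.rpow_one]
        _ ≤ ((i:ℝ)+1)^r := Real.rpow_le_rpow (Real.rpow_nonneg (by norm_num) _) h1 hr0.le
    have hcmp : ∀ i : ℕ, (c/2) * (((i+N:ℕ):ℝ)+1)^(r - q) ≤
        (⌊(((i+N:ℕ):ℝ)+1)^r⌋₊ : ℝ) * (c * (((i+N:ℕ):ℝ)+1)^(-q)) := by
      intro i
      set x : ℝ := ((i+N:ℕ):ℝ)+1 with hx
      have hx0 : (0:ℝ) < x := by rw [hx]; positivity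
      have h2x : (2:ℝ) ≤ x^r := hNbig (i+N) (Nat.le_add_left N i)
      have hfl : x^r / 2 ≤ (⌊x^r⌋₊ : ℝ) := by
        have := Nat.sub_one_lt_floor (x^r)
        linarith
      have e : (c/2) * x^(r-q) = (x^r/2) * (c * x^(-q)) := by
        rw [show r - q = r + (-q) by ring, Real.rpow_add hx0]
        ring
      rw [e]
      exact mul_le_mul_of_nonneg_right hfl (by positivity)
    have hs1 : Summable (fun i : ℕ => (c/2) * (((i+N:ℕ):ℝ)+1)^(r-q)) := by
      apply Summable.of_nonneg_of_le (fun i => by positivity) hcmp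
      exact (summable_nat_add_iff N).mpr hmarg2
    have hs2 : Summable (fun i : ℕ => ((i:ℝ))^(r-q)) := by
      rw [← summable_nat_add_iff (N+1)]
      have h' := (summable_mul_left_iff (by positivity : (c/2) ≠ 0)).mp hs1
      apply h'.congr
      intro i
      push_cast
      ring_nf
    have := summable_nat_rpow.mp hs2
    linarith
  rw [gt_iff_lt, max_lt_iff]
  constructor
  · linarith
  · have e2 : (k:ℝ) * α₂ * (1/α₁ + 1/α₂ - 1) = 1 + α₂/α₁ - α₂ * l := by
      rw [hl]; field_simp; ring
    rw [e2]; linarith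
end

section
/- Let $1 < \alpha < 2$. There is a constant $C$ depending only on $\alpha$ such that for all real $q, r \geq 3$: $\int_1^r \int_1^q \frac{dx\, dy}{[x + y\log(x+y)]^{\alpha}} \leq C \min\left(\frac{q^{2-\alpha}}{\log q},\ \frac{r^{2-\alpha}}{(\log r)^{\alpha-1}}\right)$. -/
open Real MeasureTheory

private lemma my_inner_bound {α : ℝ} (hα : 1 < α) {c L : ℝ} (hc : 0 < c) (hL : 0 < L)
    (s : ℝ) :
    ∫⁻ t in Set.Icc (1:ℝ) s, ENNReal.ofReal (1 / (c + t * L) ^ α) ≤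
      ENNReal.ofReal (c ^ (1 - α) / ((α - 1) * L)) := by
  have hden : 0 < (α - 1) * L := mul_pos (by linarith) hL
  rcases le_or_gt 1 s with hs | hs
  · have hpos : ∀ t ∈ Set.Icc (1:ℝ) s, 0 < c + t * L := by
      intro t ht; nlinarith [ht.1]
    have hcont : ContinuousOn (fun t : ℝ => 1 / (c + t * L) ^ α) (Set.Icc 1 s) := by
      apply ContinuousOn.div continuousOn_const
      · exact (continuousOn_const.add (continuousOn_id.mul continuousOn_const)).rpow_const
          (fun t ht => Or.inl (hpos t ht).ne')
      · exact fun t ht => (Real.rpow_pos_of_pos (hpos t ht) α).ne'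
    have hint : IntegrableOn (fun t : ℝ => 1 / (c + t * L) ^ α) (Set.Icc 1 s) :=
      hcont.integrableOn_Icc
    rw [← MeasureTheory.ofReal_integral_eq_lintegral_ofReal hint
      ((ae_restrict_iff' measurableSet_Icc).2 (ae_of_all _ fun t ht =>
        le_of_lt (one_div_pos.2 (Real.rpow_pos_of_pos (hpos t ht) α))))]
    apply ENNReal.ofReal_le_ofReal
    have hIoc : ∫ t in Set.Icc (1:ℝ) s, 1 / (c + t * L) ^ α =
        ∫ t in (1:ℝ)..s, 1 / (c + t * L) ^ α := by
      rw [intervalIntegral.integral_of_le hs, MeasureTheory.integral_Icc_eq_integral_Ioc]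
    set F : ℝ → ℝ := fun t => -((c + t * L) ^ (1 - α) / ((α - 1) * L)) with hF
    have hderiv : ∀ t ∈ Set.uIcc (1:ℝ) s, HasDerivAt F (1 / (c + t * L) ^ α) t := by
      intro t ht
      rw [Set.uIcc_of_le hs] at ht
      have hp := hpos t ht
      have h1 : HasDerivAt (fun t : ℝ => c + t * L) L t := by
        simpa using ((hasDerivAt_id t).mul_const L).const_add c
      have h2 := ((h1.rpow_const (p := 1 - α) (Or.inl hp.ne')).div_const ((α - 1) * L)).neg
      refine h2.congr_deriv ?_
      symm
      rw [show (1 - α - 1 : ℝ) = -α by ring, Real.rpow_neg hp.le]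
      field_simp [(by linarith : α - 1 ≠ 0)]
      ring
    have hII : IntervalIntegrable (fun t : ℝ => 1 / (c + t * L) ^ α) volume 1 s := by
      apply MeasureTheory.IntegrableOn.intervalIntegrable
      rwa [Set.uIcc_of_le hs]
    rw [hIoc, intervalIntegral.integral_eq_sub_of_hasDerivAt hderiv hII]
    have e1 : (c + 1 * L) ^ (1 - α) ≤ c ^ (1 - α) :=
      Real.rpow_le_rpow_of_nonpos hc (by linarith) (by linarith)
    have e2 : 0 < (c + s * L) ^ (1 - α) :=
      Real.rpow_pos_of_pos (by nlinarith) _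
    have hFF : F s - F 1 = ((c + 1 * L) ^ (1 - α) - (c + s * L) ^ (1 - α)) / ((α - 1) * L) := by
      rw [hF]; ring
    rw [hFF]
    exact div_le_div_of_nonneg_right (by linarith) hden.le
  · rw [Set.Icc_eq_empty (by linarith)]
    simp

private lemma my_pow_bound {α : ℝ} (hα1 : 1 < α) (hα2 : α < 2) {a : ℝ} (ha : 1 ≤ a) (b : ℝ) :
    ∫⁻ t in Set.Icc a b, ENNReal.ofReal (t ^ (1 - α)) ≤
      ENNReal.ofReal (b ^ (2 - α) / (2 - α)) := by
  rcases le_or_gt a b with hab | hab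
  · have hcont : ContinuousOn (fun t : ℝ => t ^ (1 - α)) (Set.Icc a b) :=
      continuousOn_id.rpow_const (fun t ht => Or.inl (by nlinarith [ht.1] : t ≠ 0))
    have hint : IntegrableOn (fun t : ℝ => t ^ (1 - α)) (Set.Icc a b) :=
      hcont.integrableOn_Icc
    rw [← MeasureTheory.ofReal_integral_eq_lintegral_ofReal hint
      ((ae_restrict_iff' measurableSet_Icc).2 (ae_of_all _ fun t ht =>
        Real.rpow_nonneg (by linarith [ht.1]) _))]
    apply ENNReal.ofReal_le_ofReal
    rw [MeasureTheory.integral_Icc_eq_integral_Ioc, ← intervalIntegral.integral_of_le hab,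
      integral_rpow (Or.inl (by linarith))]
    rw [show (1 - α + 1 : ℝ) = 2 - α by ring]
    have h2 : (0:ℝ) ≤ a ^ (2 - α) := Real.rpow_nonneg (by linarith) _
    exact div_le_div_of_nonneg_right (by linarith) (by linarith)
  · rw [Set.Icc_eq_empty (not_le.2 hab)]
    simp

private lemma my_outer_bound {α δ : ℝ} (hα1 : 1 < α) (hα2 : α < 2) (hδ0 : 0 < δ) (hδ1 : δ ≤ 1) :
    ∃ C : ℝ, 0 < C ∧ ∀ s : ℝ, 3 ≤ s →
      ∫⁻ t in Set.Icc (1:ℝ) s, ENNReal.ofReal (t ^ (1 - α) * Real.log (t + 1) ^ (-δ)) ≤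
        ENNReal.ofReal (C * (s ^ (2 - α) / Real.log s ^ δ)) := by
  have hl2 : (0:ℝ) < Real.log 2 := Real.log_pos one_lt_two
  have h2α : (0:ℝ) < 2 - α := by linarith
  refine ⟨Real.log 2 ^ (-δ) * (2 / (2 - α)) / (2 - α) + 2 / (2 - α), ?_, ?_⟩
  · have := Real.rpow_pos_of_pos hl2 (-δ)
    positivity
  intro s hs
  have hs0 : (0:ℝ) < s := by linarith
  set u : ℝ := Real.sqrt s with hu
  have hu1 : (1:ℝ) < u := by
    rw [hu, show (1:ℝ) = Real.sqrt 1 by simp]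
    exact Real.sqrt_lt_sqrt (by norm_num) (by linarith)
  have hu0 : (0:ℝ) < u := by linarith
  have huu : u * u = s := Real.mul_self_sqrt hs0.le
  have hlogu : Real.log u = Real.log s / 2 := Real.log_sqrt hs0.le
  have hlogs1 : (1:ℝ) ≤ Real.log s := by
    have he : Real.exp 1 ≤ 3 := by
      have := Real.exp_one_lt_d9
      linarith
    calc (1:ℝ) = Real.log (Real.exp 1) := (Real.log_exp 1).symm
      _ ≤ Real.log s := Real.log_le_log (Real.exp_pos 1) (by linarith)
  have hlogs0 : (0:ℝ) < Real.log s := by linarith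
  have hu2a : u ^ (2 - α) * u ^ (2 - α) = s ^ (2 - α) := by
    rw [← Real.mul_rpow hu0.le hu0.le, huu]
  have hkey : Real.log s ≤ 2 / (2 - α) * u ^ (2 - α) := by
    have h1 : Real.log (s ^ ((2 - α) / 2)) = (2 - α) / 2 * Real.log s :=
      Real.log_rpow hs0 _
    have h2 : Real.log (s ^ ((2 - α) / 2)) ≤ s ^ ((2 - α) / 2) := by
      have := Real.log_le_sub_one_of_pos (Real.rpow_pos_of_pos hs0 ((2 - α) / 2))
      linarith
    have h3 : u ^ (2 - α) = s ^ ((2 - α) / 2) := by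
      rw [hu, Real.sqrt_eq_rpow, ← Real.rpow_mul hs0.le]
      congr 1
      ring
    rw [h3]
    rw [h1] at h2
    rw [div_mul_eq_mul_div, le_div_iff₀ h2α]
    linarith
  have hlogδ : Real.log s ^ δ ≤ 2 / (2 - α) * u ^ (2 - α) := by
    calc Real.log s ^ δ ≤ Real.log s ^ (1:ℝ) :=
          Real.rpow_le_rpow_of_exponent_le hlogs1 hδ1
      _ = Real.log s := Real.rpow_one _
      _ ≤ _ := hkey
  have hlogδ0 : (0:ℝ) < Real.log s ^ δ := Real.rpow_pos_of_pos hlogs0 δ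
  have hsplit : Set.Icc (1:ℝ) s ⊆ Set.Icc 1 u ∪ Set.Icc u s := by
    intro t ht
    rcases le_total t u with h | h
    · exact Or.inl ⟨ht.1, h⟩
    · exact Or.inr ⟨h, ht.2⟩
  have hk1 : (0:ℝ) ≤ Real.log 2 ^ (-δ) := (Real.rpow_pos_of_pos hl2 _).le
  have hlogu0 : (0:ℝ) < Real.log u := by rw [hlogu]; linarith
  have hk2 : (0:ℝ) ≤ Real.log u ^ (-δ) := (Real.rpow_pos_of_pos hlogu0 _).le
  have piece1 : ∫⁻ t in Set.Icc (1:ℝ) u, ENNReal.ofReal (t ^ (1 - α) * Real.log (t + 1) ^ (-δ)) ≤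
      ENNReal.ofReal (Real.log 2 ^ (-δ) * (u ^ (2 - α) / (2 - α))) := by
    calc ∫⁻ t in Set.Icc (1:ℝ) u, ENNReal.ofReal (t ^ (1 - α) * Real.log (t + 1) ^ (-δ))
        ≤ ∫⁻ t in Set.Icc (1:ℝ) u, ENNReal.ofReal (Real.log 2 ^ (-δ)) *
            ENNReal.ofReal (t ^ (1 - α)) := by
          apply lintegral_mono_ae
          refine (ae_restrict_iff' measurableSet_Icc).2 (ae_of_all _ fun t ht => ?_)
          rw [← ENNReal.ofReal_mul hk1]
          apply ENNReal.ofReal_le_ofReal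
          rw [mul_comm (Real.log 2 ^ (-δ))]
          apply mul_le_mul_of_nonneg_left ?_ (Real.rpow_nonneg (by linarith [ht.1]) _)
          exact Real.rpow_le_rpow_of_nonpos hl2
            (Real.log_le_log two_pos (by linarith [ht.1])) (by linarith)
      _ = ENNReal.ofReal (Real.log 2 ^ (-δ)) *
            ∫⁻ t in Set.Icc (1:ℝ) u, ENNReal.ofReal (t ^ (1 - α)) :=
          lintegral_const_mul' _ _ ENNReal.ofReal_ne_top
      _ ≤ ENNReal.ofReal (Real.log 2 ^ (-δ)) * ENNReal.ofReal (u ^ (2 - α) / (2 - α)) :=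
          mul_le_mul_right (my_pow_bound hα1 hα2 le_rfl u) _
      _ = ENNReal.ofReal (Real.log 2 ^ (-δ) * (u ^ (2 - α) / (2 - α))) :=
          (ENNReal.ofReal_mul hk1).symm
  have piece2 : ∫⁻ t in Set.Icc u s, ENNReal.ofReal (t ^ (1 - α) * Real.log (t + 1) ^ (-δ)) ≤
      ENNReal.ofReal (Real.log u ^ (-δ) * (s ^ (2 - α) / (2 - α))) := by
    calc ∫⁻ t in Set.Icc u s, ENNReal.ofReal (t ^ (1 - α) * Real.log (t + 1) ^ (-δ))
        ≤ ∫⁻ t in Set.Icc u s, ENNReal.ofReal (Real.log u ^ (-δ)) *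
            ENNReal.ofReal (t ^ (1 - α)) := by
          apply lintegral_mono_ae
          refine (ae_restrict_iff' measurableSet_Icc).2 (ae_of_all _ fun t ht => ?_)
          rw [← ENNReal.ofReal_mul hk2]
          apply ENNReal.ofReal_le_ofReal
          rw [mul_comm (Real.log u ^ (-δ))]
          apply mul_le_mul_of_nonneg_left ?_
            (Real.rpow_nonneg (by nlinarith [ht.1] : (0:ℝ) ≤ t) _)
          exact Real.rpow_le_rpow_of_nonpos hlogu0
            (Real.log_le_log hu0 (by linarith [ht.1])) (by linarith)
      _ = ENNReal.ofReal (Real.log u ^ (-δ)) *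
            ∫⁻ t in Set.Icc u s, ENNReal.ofReal (t ^ (1 - α)) :=
          lintegral_const_mul' _ _ ENNReal.ofReal_ne_top
      _ ≤ ENNReal.ofReal (Real.log u ^ (-δ)) * ENNReal.ofReal (s ^ (2 - α) / (2 - α)) :=
          mul_le_mul_right (my_pow_bound hα1 hα2 hu1.le s) _
      _ = ENNReal.ofReal (Real.log u ^ (-δ) * (s ^ (2 - α) / (2 - α))) :=
          (ENNReal.ofReal_mul hk2).symm
  have hu2 : u ^ (2 - α) ≤ 2 / (2 - α) * (s ^ (2 - α) / Real.log s ^ δ) := by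
    have h5 : u ^ (2 - α) * Real.log s ^ δ ≤ 2 / (2 - α) * s ^ (2 - α) := by
      calc u ^ (2 - α) * Real.log s ^ δ
          ≤ u ^ (2 - α) * (2 / (2 - α) * u ^ (2 - α)) :=
            mul_le_mul_of_nonneg_left hlogδ (Real.rpow_nonneg hu0.le _)
        _ = 2 / (2 - α) * (u ^ (2 - α) * u ^ (2 - α)) := by ring
        _ = 2 / (2 - α) * s ^ (2 - α) := by rw [hu2a]
    have h6 := (le_div_iff₀ hlogδ0).2 h5
    calc u ^ (2 - α) ≤ 2 / (2 - α) * s ^ (2 - α) / Real.log s ^ δ := h6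
      _ = 2 / (2 - α) * (s ^ (2 - α) / Real.log s ^ δ) := by ring
  have hA : Real.log 2 ^ (-δ) * (u ^ (2 - α) / (2 - α)) ≤
      Real.log 2 ^ (-δ) * (2 / (2 - α)) / (2 - α) * (s ^ (2 - α) / Real.log s ^ δ) := by
    have h7 := mul_le_mul_of_nonneg_left hu2 (div_nonneg hk1 h2α.le)
    calc Real.log 2 ^ (-δ) * (u ^ (2 - α) / (2 - α))
        = Real.log 2 ^ (-δ) / (2 - α) * u ^ (2 - α) := by ring
      _ ≤ Real.log 2 ^ (-δ) / (2 - α) * (2 / (2 - α) * (s ^ (2 - α) / Real.log s ^ δ)) := h7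
      _ = Real.log 2 ^ (-δ) * (2 / (2 - α)) / (2 - α) * (s ^ (2 - α) / Real.log s ^ δ) := by
          ring
  have hB : Real.log u ^ (-δ) * (s ^ (2 - α) / (2 - α)) ≤
      2 / (2 - α) * (s ^ (2 - α) / Real.log s ^ δ) := by
    have h2δ : (2:ℝ) ^ δ ≤ 2 := by
      calc (2:ℝ) ^ δ ≤ (2:ℝ) ^ (1:ℝ) := Real.rpow_le_rpow_of_exponent_le one_le_two hδ1
        _ = 2 := Real.rpow_one _
    have hlu : Real.log u ^ (-δ) ≤ 2 / Real.log s ^ δ := by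
      rw [hlogu, Real.rpow_neg (by positivity),
        Real.div_rpow hlogs0.le (by norm_num : (0:ℝ) ≤ 2), inv_div]
      exact div_le_div_of_nonneg_right h2δ hlogδ0.le
    calc Real.log u ^ (-δ) * (s ^ (2 - α) / (2 - α))
        = s ^ (2 - α) / (2 - α) * Real.log u ^ (-δ) := by ring
      _ ≤ s ^ (2 - α) / (2 - α) * (2 / Real.log s ^ δ) :=
          mul_le_mul_of_nonneg_left hlu (div_nonneg (Real.rpow_nonneg hs0.le _) h2α.le)
      _ = 2 / (2 - α) * (s ^ (2 - α) / Real.log s ^ δ) := by ring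
  calc ∫⁻ t in Set.Icc (1:ℝ) s, ENNReal.ofReal (t ^ (1 - α) * Real.log (t + 1) ^ (-δ))
      ≤ ∫⁻ t in Set.Icc (1:ℝ) u ∪ Set.Icc u s,
          ENNReal.ofReal (t ^ (1 - α) * Real.log (t + 1) ^ (-δ)) :=
        lintegral_mono_set hsplit
    _ ≤ _ + _ := lintegral_union_le _ _ _
    _ ≤ ENNReal.ofReal (Real.log 2 ^ (-δ) * (u ^ (2 - α) / (2 - α))) +
          ENNReal.ofReal (Real.log u ^ (-δ) * (s ^ (2 - α) / (2 - α))) :=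
        add_le_add piece1 piece2
    _ ≤ ENNReal.ofReal ((Real.log 2 ^ (-δ) * (2 / (2 - α)) / (2 - α) + 2 / (2 - α)) *
          (s ^ (2 - α) / Real.log s ^ δ)) := by
        rw [← ENNReal.ofReal_add
          (mul_nonneg hk1 (div_nonneg (Real.rpow_nonneg hu0.le _) h2α.le))
          (mul_nonneg hk2 (div_nonneg (Real.rpow_nonneg hs0.le _) h2α.le))]
        apply ENNReal.ofReal_le_ofReal
        nlinarith [hA, hB]

private lemma my_halfQ {α : ℝ} (hα1 : 1 < α) (hα2 : α < 2) :
    ∃ C : ℝ, 0 < C ∧ ∀ q r : ℝ, 3 ≤ q → 3 ≤ r →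
      (∫⁻ p in Set.Icc (1 : ℝ) q ×ˢ Set.Icc (1 : ℝ) r,
          ENNReal.ofReal (1 / (p.1 + p.2 * Real.log (p.1 + p.2)) ^ α)) ≤
        ENNReal.ofReal (C * (q ^ (2 - α) / Real.log q)) := by
  obtain ⟨C₀, hC₀, hout⟩ := my_outer_bound (δ := 1) hα1 hα2 one_pos le_rfl
  have hk : (0:ℝ) ≤ 1 / (α - 1) := one_div_nonneg.2 (by linarith)
  refine ⟨1 / (α - 1) * C₀, mul_pos (one_div_pos.2 (by linarith)) hC₀, ?_⟩
  intro q r hq hr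
  have hGmeas : Measurable (fun p : ℝ × ℝ =>
      ENNReal.ofReal (1 / (p.1 + p.2 * Real.log (p.1 + 1)) ^ α)) := by
    measurability
  calc (∫⁻ p in Set.Icc (1 : ℝ) q ×ˢ Set.Icc (1 : ℝ) r,
          ENNReal.ofReal (1 / (p.1 + p.2 * Real.log (p.1 + p.2)) ^ α))
      ≤ ∫⁻ p in Set.Icc (1 : ℝ) q ×ˢ Set.Icc (1 : ℝ) r,
          ENNReal.ofReal (1 / (p.1 + p.2 * Real.log (p.1 + 1)) ^ α) := by
        apply lintegral_mono_ae
        refine (ae_restrict_iff' (measurableSet_Icc.prod measurableSet_Icc)).2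
          (ae_of_all _ fun p hp => ?_)
        obtain ⟨⟨hx1, _⟩, ⟨hy1, _⟩⟩ := hp
        have hL : 0 < Real.log (p.1 + 1) := Real.log_pos (by linarith)
        have hD2 : 0 < p.1 + p.2 * Real.log (p.1 + 1) := by nlinarith
        have hmono : p.1 + p.2 * Real.log (p.1 + 1) ≤ p.1 + p.2 * Real.log (p.1 + p.2) := by
          have := Real.log_le_log (x := p.1 + 1) (y := p.1 + p.2) (by linarith) (by linarith)
          nlinarith
        exact ENNReal.ofReal_le_ofReal (one_div_le_one_div_of_le
          (Real.rpow_pos_of_pos hD2 α)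
          (Real.rpow_le_rpow hD2.le hmono (by linarith)))
    _ = ∫⁻ x in Set.Icc (1:ℝ) q, ∫⁻ y in Set.Icc (1:ℝ) r,
          ENNReal.ofReal (1 / (x + y * Real.log (x + 1)) ^ α) := by
        rw [MeasureTheory.Measure.volume_eq_prod, ← MeasureTheory.Measure.prod_restrict,
          MeasureTheory.lintegral_prod _ hGmeas.aemeasurable]
    _ ≤ ∫⁻ x in Set.Icc (1:ℝ) q,
          ENNReal.ofReal (1 / (α - 1) * (x ^ (1 - α) * Real.log (x + 1) ^ (-(1:ℝ)))) := by
        apply lintegral_mono_ae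
        refine (ae_restrict_iff' measurableSet_Icc).2 (ae_of_all _ fun x hx => ?_)
        have hx1 : (1:ℝ) ≤ x := hx.1
        have hL : 0 < Real.log (x + 1) := Real.log_pos (by linarith)
        refine (my_inner_bound hα1 (by linarith : (0:ℝ) < x) hL r).trans ?_
        apply ENNReal.ofReal_le_ofReal
        rw [Real.rpow_neg_one]
        rw [div_eq_mul_inv, mul_inv, one_div]
        ring_nf
        exact le_refl _
    _ ≤ ENNReal.ofReal (1 / (α - 1)) * ENNReal.ofReal (C₀ * (q ^ (2 - α) / Real.log q ^ (1:ℝ))) := by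
        simp_rw [ENNReal.ofReal_mul hk]
        rw [lintegral_const_mul' _ _ ENNReal.ofReal_ne_top]
        exact mul_le_mul_right (hout q hq) _
    _ ≤ ENNReal.ofReal (1 / (α - 1) * C₀ * (q ^ (2 - α) / Real.log q)) := by
        rw [← ENNReal.ofReal_mul hk, Real.rpow_one, mul_assoc]

private lemma my_halfR {α : ℝ} (hα1 : 1 < α) (hα2 : α < 2) :
    ∃ C : ℝ, 0 < C ∧ ∀ q r : ℝ, 3 ≤ q → 3 ≤ r →
      (∫⁻ p in Set.Icc (1 : ℝ) q ×ˢ Set.Icc (1 : ℝ) r,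
          ENNReal.ofReal (1 / (p.1 + p.2 * Real.log (p.1 + p.2)) ^ α)) ≤
        ENNReal.ofReal (C * (r ^ (2 - α) / Real.log r ^ (α - 1))) := by
  obtain ⟨C₀, hC₀, hout⟩ := my_outer_bound (δ := α - 1) hα1 hα2 (by linarith) (by linarith)
  have hk : (0:ℝ) ≤ 1 / (α - 1) := one_div_nonneg.2 (by linarith)
  refine ⟨1 / (α - 1) * C₀, mul_pos (one_div_pos.2 (by linarith)) hC₀, ?_⟩
  intro q r hq hr
  have hGmeas : Measurable (fun p : ℝ × ℝ =>
      ENNReal.ofReal (1 / (p.2 * Real.log (p.2 + 1) + p.1) ^ α)) := by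
    measurability
  calc (∫⁻ p in Set.Icc (1 : ℝ) q ×ˢ Set.Icc (1 : ℝ) r,
          ENNReal.ofReal (1 / (p.1 + p.2 * Real.log (p.1 + p.2)) ^ α))
      ≤ ∫⁻ p in Set.Icc (1 : ℝ) q ×ˢ Set.Icc (1 : ℝ) r,
          ENNReal.ofReal (1 / (p.2 * Real.log (p.2 + 1) + p.1) ^ α) := by
        apply lintegral_mono_ae
        refine (ae_restrict_iff' (measurableSet_Icc.prod measurableSet_Icc)).2
          (ae_of_all _ fun p hp => ?_)
        obtain ⟨⟨hx1, _⟩, ⟨hy1, _⟩⟩ := hp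
        have hL : 0 < Real.log (p.2 + 1) := Real.log_pos (by linarith)
        have hD2 : 0 < p.2 * Real.log (p.2 + 1) + p.1 := by nlinarith
        have hmono : p.2 * Real.log (p.2 + 1) + p.1 ≤ p.1 + p.2 * Real.log (p.1 + p.2) := by
          have := Real.log_le_log (x := p.2 + 1) (y := p.1 + p.2) (by linarith) (by linarith)
          nlinarith
        exact ENNReal.ofReal_le_ofReal (one_div_le_one_div_of_le
          (Real.rpow_pos_of_pos hD2 α)
          (Real.rpow_le_rpow hD2.le hmono (by linarith)))
    _ = ∫⁻ y in Set.Icc (1:ℝ) r, ∫⁻ x in Set.Icc (1:ℝ) q,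
          ENNReal.ofReal (1 / (y * Real.log (y + 1) + x) ^ α) := by
        rw [MeasureTheory.Measure.volume_eq_prod, ← MeasureTheory.Measure.prod_restrict,
          MeasureTheory.lintegral_prod_symm _ hGmeas.aemeasurable]
    _ ≤ ∫⁻ y in Set.Icc (1:ℝ) r,
          ENNReal.ofReal (1 / (α - 1) * (y ^ (1 - α) * Real.log (y + 1) ^ (-(α - 1)))) := by
        apply lintegral_mono_ae
        refine (ae_restrict_iff' measurableSet_Icc).2 (ae_of_all _ fun y hy => ?_)
        have hy1 : (1:ℝ) ≤ y := hy.1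
        have hL : 0 < Real.log (y + 1) := Real.log_pos (by linarith)
        have hc : 0 < y * Real.log (y + 1) := by nlinarith
        have h9 : ∫⁻ x in Set.Icc (1:ℝ) q,
            ENNReal.ofReal (1 / (y * Real.log (y + 1) + x) ^ α) ≤
            ENNReal.ofReal ((y * Real.log (y + 1)) ^ (1 - α) / ((α - 1) * 1)) := by
          simpa using my_inner_bound hα1 hc one_pos q
        refine h9.trans ?_
        apply ENNReal.ofReal_le_ofReal
        rw [Real.mul_rpow (by linarith) hL.le, mul_one,
          show -(α - 1) = 1 - α by ring]
        rw [div_eq_mul_inv, one_div]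
        ring_nf
        exact le_refl _
    _ ≤ ENNReal.ofReal (1 / (α - 1)) *
          ENNReal.ofReal (C₀ * (r ^ (2 - α) / Real.log r ^ (α - 1))) := by
        simp_rw [ENNReal.ofReal_mul hk]
        rw [lintegral_const_mul' _ _ ENNReal.ofReal_ne_top]
        exact mul_le_mul_right (hout r hr) _
    _ ≤ ENNReal.ofReal (1 / (α - 1) * C₀ * (r ^ (2 - α) / Real.log r ^ (α - 1))) := by
        rw [← ENNReal.ofReal_mul hk, mul_assoc]

theorem stmt_14 (α : ℝ) (hα1 : 1 < α) (hα2 : α < 2) :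
    ∃ C : ℝ, 0 < C ∧ ∀ q r : ℝ, 3 ≤ q → 3 ≤ r →
      (∫⁻ p in Set.Icc (1 : ℝ) q ×ˢ Set.Icc (1 : ℝ) r,
          ENNReal.ofReal (1 / (p.1 + p.2 * Real.log (p.1 + p.2)) ^ α)) ≤
        ENNReal.ofReal
          (C * min (q ^ (2 - α) / Real.log q)
            (r ^ (2 - α) / (Real.log r) ^ (α - 1))) := by
  obtain ⟨C₁, hC₁, h₁⟩ := my_halfQ hα1 hα2
  obtain ⟨C₂, hC₂, h₂⟩ := my_halfR hα1 hα2
  refine ⟨max C₁ C₂, lt_max_of_lt_left hC₁, fun q r hq hr => ?_⟩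
  have hA : (0:ℝ) ≤ q ^ (2 - α) / Real.log q :=
    div_nonneg (Real.rpow_nonneg (by linarith) _) (Real.log_nonneg (by linarith))
  have hB : (0:ℝ) ≤ r ^ (2 - α) / Real.log r ^ (α - 1) :=
    div_nonneg (Real.rpow_nonneg (by linarith) _)
      (Real.rpow_nonneg (Real.log_nonneg (by linarith)) _)
  rcases le_total (q ^ (2 - α) / Real.log q) (r ^ (2 - α) / Real.log r ^ (α - 1)) with h | h
  · rw [min_eq_left h]
    exact (h₁ q r hq hr).trans (ENNReal.ofReal_le_ofReal
      (mul_le_mul_of_nonneg_right (le_max_left _ _) hA))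
  · rw [min_eq_right h]
    exact (h₂ q r hq hr).trans (ENNReal.ofReal_le_ofReal
      (mul_le_mul_of_nonneg_right (le_max_right _ _) hB))
end
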